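/- For every η > 0 and r ∈ ℕ there exists L ∈ ℕ such that the following holds. Let G be a finite graph and let Q be an equipartition of V(G) into r parts. Then there exists an η-regular equipartition P of V(G) that refines Q and such that each part of Q is refined into at most L parts of P. -/

import Mathlib

/-- `e(X, Y)`: the number of edges of `G` with one endpoint in `X` and the other in `Y`
(for disjoint `X` and `Y`). -/
noncomputable def edgesBetween {V : Type*} (G : SimpleGraph V) (X Y : Finset V) : ℕ :=
  {p : V × V | p.1 ∈ X ∧ p.2 ∈ Y ∧ G.Adj p.1 p.2}.ncard

/-- The density `d(X, Y) = e(X,Y)/(|X|·|Y|)` between disjoint vertex sets. -/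
noncomputable def dens {V : Type*} (G : SimpleGraph V) (X Y : Finset V) : ℝ :=
  (edgesBetween G X Y : ℝ) / ((X.card : ℝ) * (Y.card : ℝ))

/-- The pair `(A, B)` is `η`-regular: for all `X ⊆ A` and `Y ⊆ B` with `|X| ≥ η|A|` and
`|Y| ≥ η|B|` one has `|d(X,Y) − d(A,B)| ≤ η`. -/
def IsRegularPair {V : Type*} (G : SimpleGraph V) (η : ℝ) (A B : Finset V) : Prop :=
  ∀ X ⊆ A, ∀ Y ⊆ B, η * (A.card : ℝ) ≤ (X.card : ℝ) → η * (B.card : ℝ) ≤ (Y.card : ℝ) →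
    |dens G X Y - dens G A B| ≤ η

/-- A partition is `η`-regular if all but at most `η·C(t,2)` of the (unordered) pairs of
distinct parts are `η`-regular; here counted as ordered pairs, hence the factor `2`. -/
def IsRegularPartition {V : Type*} [DecidableEq V] [Fintype V] (G : SimpleGraph V) (η : ℝ)
    (P : Finpartition (Finset.univ : Finset V)) : Prop :=
  ({pq : Finset V × Finset V | pq.1 ∈ P.parts ∧ pq.2 ∈ P.parts ∧ pq.1 ≠ pq.2 ∧
      ¬ IsRegularPair G η pq.1 pq.2}.ncard : ℝ) ≤ 2 * (η * (P.parts.card.choose 2 : ℝ))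


set_option linter.unusedSectionVars false
set_option linter.unusedVariables false

open Finset Fintype Function SzemerediRegularity

section Aux
variable {V : Type*} (G : SimpleGraph V) [DecidableRel G.Adj]

lemma edgesBetween_eq_card_interedges [DecidableEq V] (X Y : Finset V) :
    edgesBetween G X Y = (G.interedges X Y).card := by
  rw [edgesBetween, ← Set.ncard_coe_finset]
  congr 1
  ext p
  simp [SimpleGraph.interedges, Rel.mem_interedges_iff]

lemma dens_eq_edgeDensity [DecidableEq V] (X Y : Finset V) :
    dens G X Y = (G.edgeDensity X Y : ℝ) := by
  unfold _root_.dens SimpleGraph.edgeDensity Rel.edgeDensity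
  rw [edgesBetween_eq_card_interedges]
  push_cast
  rfl

lemma dens_nonneg (X Y : Finset V) : 0 ≤ dens G X Y := by
  unfold _root_.dens; positivity

lemma dens_le_one [DecidableEq V] (X Y : Finset V) : dens G X Y ≤ 1 := by
  rw [dens_eq_edgeDensity]
  exact_mod_cast Rel.edgeDensity_le_one _ X Y

lemma isRegularPair_of_one_le [DecidableEq V] {η : ℝ} (hη : 1 ≤ η) (A B : Finset V) :
    IsRegularPair G η A B := by
  intro X _ Y _ _ _
  have h1 := dens_nonneg G X Y
  have h2 := dens_le_one G X Y
  have h3 := dens_nonneg G A B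
  have h4 := dens_le_one G A B
  rw [abs_sub_le_iff]
  constructor <;> linarith

lemma isRegularPair_of_isUniform [DecidableEq V] {η : ℝ} {A B : Finset V}
    (h : G.IsUniform η A B) : IsRegularPair G η A B := by
  intro X hX Y hY hXc hYc
  rw [dens_eq_edgeDensity, dens_eq_edgeDensity]
  refine (h hX hY ?_ ?_).le
  · rw [mul_comm]; exact hXc
  · rw [mul_comm]; exact hYc

lemma isRegularPair_singleton {η : ℝ} (hη : 0 < η) (a b : V) :
    IsRegularPair G η {a} {b} := by
  intro X hX Y hY hXc hYc
  simp only [Finset.card_singleton, Nat.cast_one, mul_one] at hXc hYc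
  have hXne : X.Nonempty := by
    rw [← Finset.card_pos]
    by_contra h
    simp only [Finset.card_pos, Finset.nonempty_iff_ne_empty, not_not] at h
    rw [h] at hXc; simp at hXc; linarith
  have hYne : Y.Nonempty := by
    rw [← Finset.card_pos]
    by_contra h
    simp only [Finset.card_pos, Finset.nonempty_iff_ne_empty, not_not] at h
    rw [h] at hYc; simp at hYc; linarith
  have hX' : X = {a} := by
    rcases Finset.subset_singleton_iff.1 hX with h | h
    · exact absurd h hXne.ne_empty
    · exact h
  have hY' : Y = {b} := by
    rcases Finset.subset_singleton_iff.1 hY with h | h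
    · exact absurd h hYne.ne_empty
    · exact h
  rw [hX', hY', sub_self, abs_zero]
  exact hη.le

lemma two_mul_choose_two (n : ℕ) : n * (n - 1) = 2 * n.choose 2 := by
  rw [Nat.choose_two_right, Nat.mul_div_cancel']
  rcases Nat.even_or_odd n with h | h
  · exact Dvd.dvd.mul_right h.two_dvd _
  · rcases n with _ | m
    · simp
    · refine Dvd.dvd.mul_left ?_ _
      simp only [Nat.add_sub_cancel]
      rcases Nat.even_or_odd m with h' | h'
      · exact h'.two_dvd
      · exact absurd (h'.add_one) (by simpa using h)

end Aux

lemma isRegularPartition_of_isUniform {V : Type*} [Fintype V] [DecidableEq V]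
    (G : SimpleGraph V) [DecidableRel G.Adj] {η : ℝ} (hη : 0 ≤ η)
    {P : Finpartition (Finset.univ : Finset V)} (h : P.IsUniform G η) :
    IsRegularPartition G η P := by
  rw [IsRegularPartition]
  have hsub : {pq : Finset V × Finset V | pq.1 ∈ P.parts ∧ pq.2 ∈ P.parts ∧ pq.1 ≠ pq.2 ∧
      ¬ IsRegularPair G η pq.1 pq.2} ⊆ ↑(P.nonUniforms G η) := by
    rintro ⟨A, B⟩ ⟨hA, hB, hne, hreg⟩
    simp only [Finset.mem_coe, Finpartition.mk_mem_nonUniforms]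
    exact ⟨hA, hB, hne, fun hu => hreg (isRegularPair_of_isUniform G hu)⟩
  have h1 := Set.ncard_le_ncard hsub (Finset.finite_toSet _)
  rw [Set.ncard_coe_finset] at h1
  calc ({pq : Finset V × Finset V | pq.1 ∈ P.parts ∧ pq.2 ∈ P.parts ∧ pq.1 ≠ pq.2 ∧
      ¬ IsRegularPair G η pq.1 pq.2}.ncard : ℝ) ≤ ((P.nonUniforms G η).card : ℝ) := by
        exact_mod_cast h1
    _ ≤ (P.parts.card * (P.parts.card - 1) : ℕ) * η := h
    _ = 2 * (η * (P.parts.card.choose 2 : ℝ)) := by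
        rw [two_mul_choose_two]; push_cast; ring

lemma isRegularPartition_bot {V : Type*} [Fintype V] [DecidableEq V]
    (G : SimpleGraph V) {η : ℝ} (hη : 0 < η) :
    IsRegularPartition G η (⊥ : Finpartition (Finset.univ : Finset V)) := by
  classical
  rw [IsRegularPartition]
  have : {pq : Finset V × Finset V | pq.1 ∈ (⊥ : Finpartition (Finset.univ : Finset V)).parts ∧
      pq.2 ∈ (⊥ : Finpartition (Finset.univ : Finset V)).parts ∧ pq.1 ≠ pq.2 ∧
      ¬ IsRegularPair G η pq.1 pq.2} = ∅ := by
    ext ⟨A, B⟩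
    simp only [Set.mem_setOf_eq, Set.mem_empty_iff_false, iff_false, not_and]
    intro hA hB _
    rw [Finpartition.mem_bot_iff] at hA hB
    obtain ⟨a, -, rfl⟩ := hA
    obtain ⟨b, -, rfl⟩ := hB
    simp only [not_not]
    exact isRegularPair_singleton G hη a b
  rw [this, Set.ncard_empty, Nat.cast_zero]
  positivity

lemma exists_initial_partition {V : Type*} [Fintype V] [DecidableEq V]
    (Q : Finpartition (Finset.univ : Finset V)) (hQ : Q.IsEquipartition)
    (k : ℕ) (hk : 0 < k) (hr : 0 < Q.parts.card)
    (hn : Q.parts.card * k ≤ (Finset.univ : Finset V).card) :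
    ∃ P : Finpartition (Finset.univ : Finset V), P.IsEquipartition ∧
      P.parts.card = Q.parts.card * k ∧ ∀ p ∈ P.parts, ∃ q ∈ Q.parts, p ⊆ q := by
  set n := (Finset.univ : Finset V).card with hn'
  set r := Q.parts.card with hr'
  set s := n / (r * k) with hs'
  have hs0 : s ≠ 0 := by
    rw [hs']
    have := Nat.one_le_div_iff (Nat.mul_pos hr hk) |>.2 hn
    omega
  have key : ∀ q ∈ Q.parts, ∃ R : Finpartition q,
      (∀ p ∈ R.parts, p.card = s ∨ p.card = s + 1) ∧ R.parts.card = k := by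
    intro q hq
    have hq1 : n / r ≤ q.card := hQ.average_le_card_part hq
    have hq2 : q.card ≤ n / r + 1 := hQ.card_part_le_average_add_one hq
    have hsk : s = n / r / k := by rw [hs', Nat.div_div_eq_div_mul]
    have hks : k * s ≤ q.card := by
      have : (n / r / k) * k ≤ n / r := Nat.div_mul_le_self _ _
      rw [hsk, mul_comm]
      omega
    have hqk : q.card ≤ k * s + k := by
      have h1 : n / r < k * (n / r / k + 1) := Nat.lt_mul_div_succ _ hk
      rw [hsk]
      nlinarith [h1, hq2]
    set b := q.card - k * s with hb'
    have hb : b ≤ k := by omega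
    have hsum : (k - b) * s + b * (s + 1) = q.card := by
      have h1 : (k - b) * s + b * (s + 1) = ((k - b) + b) * s + b := by ring
      rw [h1, Nat.sub_add_cancel hb]
      omega
    refine ⟨(⊥ : Finpartition q).equitabilise hsum, fun p hp =>
      Finpartition.card_eq_of_mem_parts_equitabilise hp, ?_⟩
    rw [Finpartition.card_parts_equitabilise _ _ hs0]
    omega
  choose R hR1 hR2 using key
  refine ⟨Q.bind R, ?_, ?_, ?_⟩
  · rw [Finpartition.IsEquipartition, Set.equitableOn_iff_exists_eq_eq_add_one]
    refine ⟨s, fun p hp => ?_⟩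
    rw [Finset.mem_coe, Finpartition.mem_bind] at hp
    obtain ⟨q, hq, hp⟩ := hp
    exact hR1 q hq p hp
  · rw [Finpartition.card_bind]
    rw [Finset.sum_congr rfl fun A _ => hR2 A.1 A.2, Finset.sum_const, Finset.card_attach,
      smul_eq_mul]
  · intro p hp
    rw [Finpartition.mem_bind] at hp
    obtain ⟨q, hq, hp⟩ := hp
    exact ⟨q, hq, (R q hq).le hp⟩

/-- refined regularity lemma. For every `η > 0` and `r` there is `L` such
that every graph `G` with an equipartition `Q` of its vertex set into `r` parts admits an
`η`-regular equipartition `P` refining `Q` in which each part of `Q` is split into at most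
`L` parts. -/
theorem refined_regularity
    (η : ℝ) (hη : 0 < η) (r : ℕ) :
    ∃ L : ℕ, ∀ (V : Type) [Fintype V] [DecidableEq V] (G : SimpleGraph V)
      (Q : Finpartition (Finset.univ : Finset V)),
      Q.IsEquipartition → Q.parts.card = r →
      ∃ P : Finpartition (Finset.univ : Finset V),
        P.IsEquipartition ∧
        (∀ p ∈ P.parts, ∃ q ∈ Q.parts, p ⊆ q) ∧
        (∀ q ∈ Q.parts, ({p ∈ P.parts | p ⊆ q} : Finset (Finset V)).card ≤ L) ∧
        IsRegularPartition G η P := by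
  classical
  set t := initialBound η 1 with ht
  set d := ⌊4 / η ^ 5⌋₊ + 1 with hd
  set N := stepBound^[d] (r * t) with hN
  set B := N * 16 ^ N with hB
  have ht7 : 7 ≤ t := seven_le_initialBound η 1
  have hrtN : r * t ≤ N := id_le_iterate_of_id_le le_stepBound d (r * t)
  have hNB : N ≤ B := Nat.le_mul_of_pos_right N (by positivity)
  refine ⟨B + 1, ?_⟩
  intro V _ _ G Q hQ hQr
  haveI : DecidableRel G.Adj := Classical.decRel _
  obtain hη1 | hη1 := le_or_gt 1 η
  -- trivial case η ≥ 1 : take P = Q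
  · refine ⟨Q, hQ, fun p hp => ⟨p, hp, subset_rfl⟩, fun q hq => ?_, ?_⟩
    · calc ({p ∈ Q.parts | p ⊆ q} : Finset (Finset V)).card ≤ Q.parts.card :=
          Finset.card_filter_le _ _
        _ = r := hQr
        _ ≤ B + 1 := by
          have : r ≤ r * t := Nat.le_mul_of_pos_right r (by omega)
          omega
    · rw [IsRegularPartition]
      have hempty : {pq : Finset V × Finset V | pq.1 ∈ Q.parts ∧ pq.2 ∈ Q.parts ∧
          pq.1 ≠ pq.2 ∧ ¬ IsRegularPair G η pq.1 pq.2} = ∅ := by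
        ext ⟨A, C⟩
        simp only [Set.mem_setOf_eq, Set.mem_empty_iff_false, iff_false, not_and]
        exact fun _ _ _ => not_not_intro (isRegularPair_of_one_le G hη1 A C)
      rw [hempty, Set.ncard_empty, Nat.cast_zero]
      positivity
  obtain hV | hV := le_or_gt (card V) B
  -- small case: partition into singletons
  · refine ⟨⊥, Finpartition.bot_isEquipartition _, ?_, ?_, isRegularPartition_bot G hη⟩
    · intro p hp
      rw [Finpartition.mem_bot_iff] at hp
      obtain ⟨a, -, rfl⟩ := hp
      obtain ⟨q, hq, haq⟩ := Q.exists_mem (Finset.mem_univ a)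
      exact ⟨q, hq, Finset.singleton_subset_iff.2 haq⟩
    · intro q hq
      calc ({p ∈ (⊥ : Finpartition (Finset.univ : Finset V)).parts | p ⊆ q} :
            Finset (Finset V)).card
          ≤ (⊥ : Finpartition (Finset.univ : Finset V)).parts.card := Finset.card_filter_le _ _
        _ = card V := by rw [Finpartition.card_bot, Finset.card_univ]
        _ ≤ B + 1 := by omega
  -- main case
  have hr : 0 < r := by
    rcases Nat.eq_zero_or_pos r with h0 | h0
    · exfalso
      rw [h0, Finset.card_eq_zero, Finpartition.parts_eq_empty_iff] at hQr
      have : card V = 0 := by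
        rw [← Finset.card_univ, hQr]; simp
      omega
    · exact h0
  have hrt : r * t ≤ (Finset.univ : Finset V).card := by
    rw [Finset.card_univ]; omega
  obtain ⟨P₀, hP₀e, hP₀card, hP₀ref⟩ :=
    exists_initial_partition Q hQ t (by omega) (by omega : 0 < Q.parts.card) (by rwa [hQr])
  rw [hQr] at hP₀card
  have : Nonempty V := by
    rw [← Fintype.card_pos_iff]; omega
  -- induction on energy
  suffices h : ∀ i, ∃ P : Finpartition (Finset.univ : Finset V), P.IsEquipartition ∧
      t ≤ P.parts.card ∧ P.parts.card ≤ stepBound^[i] (r * t) ∧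
      (∀ p ∈ P.parts, ∃ q ∈ Q.parts, p ⊆ q) ∧
      (P.IsUniform G η ∨ η ^ 5 / 4 * i ≤ P.energy G) by
    obtain ⟨P, hP₁, hP₂, hP₃, hPref, hP₄⟩ := h d
    have huni : P.IsUniform G η := by
      refine hP₄.resolve_right fun hPenergy => lt_irrefl (1 : ℝ) ?_
      calc (1 : ℝ) = η ^ 5 / 4 * (4 / η ^ 5) := by
            rw [mul_comm, div_mul_div_cancel₀ (pow_pos hη 5).ne']; norm_num
        _ < η ^ 5 / 4 * (⌊4 / η ^ 5⌋₊ + 1) :=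
            (mul_lt_mul_iff_right₀ <| by positivity).2 (Nat.lt_floor_add_one _)
        _ ≤ (P.energy G : ℝ) := by
            rw [hd] at hPenergy; rw [← Nat.cast_add_one]
            exact_mod_cast hPenergy
        _ ≤ 1 := mod_cast P.energy_le_one G
    refine ⟨P, hP₁, hPref, fun q hq => ?_, isRegularPartition_of_isUniform G hη.le huni⟩
    calc ({p ∈ P.parts | p ⊆ q} : Finset (Finset V)).card ≤ P.parts.card :=
        Finset.card_filter_le _ _
      _ ≤ N := hP₃
      _ ≤ B + 1 := by omega
  intro i
  induction' i with i ih
  · refine ⟨P₀, hP₀e, ?_, ?_, hP₀ref, Or.inr ?_⟩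
    · rw [hP₀card]; exact Nat.le_mul_of_pos_left t hr
    · rw [hP₀card]; simp
    · rw [Nat.cast_zero, mul_zero]
      exact mod_cast P₀.energy_nonneg G
  obtain ⟨P, hP₁, hP₂, hP₃, hPref, hP₄⟩ := ih
  by_cases huniform : P.IsUniform G η
  · refine ⟨P, hP₁, hP₂, ?_, hPref, Or.inl huniform⟩
    rw [iterate_succ_apply']
    exact hP₃.trans (le_stepBound _)
  replace hP₄ := hP₄.resolve_left huniform
  have hεl' : 100 ≤ 4 ^ P.parts.card * η ^ 5 :=
    (hundred_lt_pow_initialBound_mul hη 1).le.trans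
      (mul_le_mul_of_nonneg_right (pow_right_mono₀ (by norm_num) hP₂) <| by positivity)
  have hi : (i : ℝ) ≤ 4 / η ^ 5 := by
    have hi : η ^ 5 / 4 * ↑i ≤ 1 := hP₄.trans (mod_cast P.energy_le_one G)
    rw [div_mul_eq_mul_div, div_le_iff₀ (show (0 : ℝ) < 4 by norm_num)] at hi
    norm_num at hi
    rwa [le_div_iff₀' (pow_pos hη _)]
  have hsize : P.parts.card ≤ stepBound^[⌊4 / η ^ 5⌋₊] (r * t) :=
    hP₃.trans (monotone_iterate_of_id_le le_stepBound (Nat.le_floor hi) _)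
  have hsize' : P.parts.card ≤ N := by
    refine hsize.trans (monotone_iterate_of_id_le le_stepBound (by omega) _)
  have hPα : P.parts.card * 16 ^ P.parts.card ≤ card V := by
    calc P.parts.card * 16 ^ P.parts.card ≤ N * 16 ^ N :=
        Nat.mul_le_mul hsize' (Nat.pow_le_pow_right (by norm_num) hsize')
      _ ≤ card V := by omega
  refine ⟨increment hP₁ G η, increment_isEquipartition hP₁ G η, ?_, ?_, ?_,
    Or.inr <| le_trans ?_ <|
      energy_increment hP₁ ((seven_le_initialBound η 1).trans hP₂) hεl' hPα huniform hη.le hη1.le⟩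
  · rw [card_increment hPα huniform]
    exact hP₂.trans (le_stepBound _)
  · rw [card_increment hPα huniform, iterate_succ_apply']
    exact stepBound_mono hP₃
  · intro p hp
    have hp' : p ∈ (P.bind fun U => chunk hP₁ G η).parts := hp
    rw [Finpartition.mem_bind] at hp'
    obtain ⟨U, hU, hp'⟩ := hp'
    obtain ⟨q, hq, hUq⟩ := hPref U hU
    exact ⟨q, hq, ((chunk hP₁ G η hU).le hp').trans hUq⟩
  · rw [Nat.cast_succ, mul_add, mul_one]
    exact add_le_add_left hP₄ _
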